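/- For every integer k ≥ 1 and every real p ∈ (0,1), p^{1−1/(2k)} ≤ k(p − p^{1−1/k})/log p. (That is, the lower bound on the value of the continuous non-adaptive search and rescue game with k targets given by the Searcher strategy s* never exceeds the upper bound given by the Hider strategy h*.) -/

import Mathlib

lemma key_exp (y : ℝ) (hy : 0 ≤ y) : 2 * y ≤ Real.exp y - Real.exp (-y) := by
  have h := Real.self_le_sinh_iff.mpr hy
  rw [Real.sinh_eq] at h
  linarith

/-- The lower bound never exceeds the upper bound in Proposition 11:
`p^(1 - 1/(2k)) ≤ k (p - p^(1 - 1/k)) / log p` for `p ∈ (0,1)`. -/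
theorem lower_le_upper (k : ℕ) (hk : 1 ≤ k) (p : ℝ) (hp0 : 0 < p) (hp1 : p < 1) :
    p ^ (1 - 1 / (2 * (k : ℝ))) ≤
      (k : ℝ) * (p - p ^ (1 - 1 / (k : ℝ))) / Real.log p := by
  have hkpos : (0:ℝ) < (k:ℝ) := by exact_mod_cast hk
  have hL : Real.log p < 0 := Real.log_neg hp0 hp1
  set L := Real.log p with hLdef
  rw [le_div_iff_of_neg hL]
  set y : ℝ := -L / (2 * k) with hy
  have hypos : 0 < y := by
    apply div_pos (by linarith) (by positivity)
  have hLy : L = -(2 * k) * y := by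
    field_simp [hy]
    rw [hy]; field_simp
  have h1 : 1 - 1 / (k:ℝ) = L⁻¹ * (L + 2 * y) := by
    rw [hLy]; field_simp; ring
  have h2 : 1 - 1 / (2 * (k:ℝ)) = L⁻¹ * (L + y) := by
    rw [hLy]; field_simp; ring
  have hLne : L ≠ 0 := ne_of_lt hL
  have hrw : ∀ c : ℝ, p ^ (L⁻¹ * (L + c)) = Real.exp (L + c) := by
    intro c
    rw [Real.rpow_def_of_pos hp0, ← hLdef, ← mul_assoc, mul_inv_cancel₀ hLne, one_mul]
  have hp : p = Real.exp L := (Real.exp_log hp0).symm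
  rw [h1, h2, hrw, hrw]
  have hE : Real.exp (L + 2 * y) = Real.exp L * Real.exp y * Real.exp y := by
    rw [← Real.exp_add, ← Real.exp_add]; ring_nf
  have hE2 : Real.exp (L + y) = Real.exp L * Real.exp y := by
    rw [← Real.exp_add]
  rw [hE, hE2]
  have hkey := key_exp y hypos.le
  have hAB : Real.exp y * Real.exp (-y) = 1 := by
    rw [← Real.exp_add]; simp
  have hEpos : 0 < Real.exp L := Real.exp_pos _
  have hA : 0 < Real.exp y := Real.exp_pos _
  have hB : 0 < Real.exp (-y) := Real.exp_pos _
  rw [hp]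
  have hmul : (2 * y) * ((k:ℝ) * Real.exp L * Real.exp y) ≤
      (Real.exp y - Real.exp (-y)) * ((k:ℝ) * Real.exp L * Real.exp y) :=
    mul_le_mul_of_nonneg_right hkey (by positivity)
  have heq : (Real.exp y - Real.exp (-y)) * ((k:ℝ) * Real.exp L * Real.exp y)
      = (k:ℝ) * Real.exp L * (Real.exp y * Real.exp y) - (k:ℝ) * Real.exp L := by
    linear_combination (-((k:ℝ) * Real.exp L)) * hAB
  rw [heq] at hmul
  have hfin : Real.exp L * Real.exp y * L = -(2 * y * ((k:ℝ) * Real.exp L * Real.exp y)) := by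
    rw [hLy]; ring
  rw [hfin]
  linarith
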